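/- (Theorem 1, canonical form) For every element x of F₀ there exist unique k, l ∈ ℕ and unique sequences 0 ≤ i₁ ≤ i₂ ≤ … ≤ i_k and j₁ ≥ j₂ ≥ … ≥ j_l ≥ 0 of natural numbers such that x = π(η_{i₁} * … * η_{i_k} * ε_{j₁} * … * ε_{j_l}) (with the empty product understood as 1 when k = 0 or l = 0). In particular, two words η_{i₁}…η_{i_k} ε_{j₁}…ε_{j_l} and η_{i'₁}…η_{i'_{k'}} ε_{j'₁}…ε_{j'_{l'}} with nondecreasing η-indices and nonincreasing ε-indices are identified in F₀ only if they are equal as words. -/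

import Mathlib

/-- The free monoid on the generators `η_k` and `ε_k` (`k ∈ ℕ`). -/
abbrev FreeAdj := FreeMonoid (Bool × ℕ)

/-- The generator `η_k`. -/
def ηgen (k : ℕ) : FreeAdj := FreeMonoid.of (true, k)

/-- The generator `ε_k`. -/
def εgen (k : ℕ) : FreeAdj := FreeMonoid.of (false, k)

/-- The set of relation pairs `R₀`. -/
inductive R0 : FreeAdj → FreeAdj → Prop
  | ee {i j : ℕ} (h : i < j) : R0 (εgen i * εgen j) (εgen (j - 1) * εgen i)
  | hh {i j : ℕ} (h : i < j) : R0 (ηgen j * ηgen i) (ηgen i * ηgen (j - 1))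
  | eh_gt {i j : ℕ} (h : i + 1 < j) : R0 (εgen i * ηgen j) (ηgen (j - 1) * εgen i)
  | eh_lt {i j : ℕ} (h : j < i) : R0 (εgen i * ηgen j) (ηgen j * εgen (i - 1))
  | eh_eq {i : ℕ} (h : 0 < i) : R0 (εgen i * ηgen i) (εgen (i - 1) * ηgen i)
  | eh_succ (i : ℕ) : R0 (εgen i * ηgen (i + 1)) (εgen i * ηgen i)
  | eh_zero : R0 (εgen 0 * ηgen 0) 1

/-- The monoid `F₀`: the quotient of the free monoid by the congruence
generated by `R₀`. -/
abbrev F0 := (conGen R0).Quotient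

/-- The quotient map `π : F →* F₀`. -/
def πmap : FreeAdj →* F0 := (conGen R0).mk'

namespace Canon
open List

def hmap (i : ℕ) : Function.End ℕ := fun n => if n < i then n else n + 1
def emap (i : ℕ) : Function.End ℕ := fun n => if n ≤ i then n else n - 1

lemma mulE (f g : Function.End ℕ) (n : ℕ) : (f * g) n = f (g n) := rfl
lemma oneE (n : ℕ) : (1 : Function.End ℕ) n = n := rfl

def φ : FreeAdj →* Function.End ℕ :=
  FreeMonoid.lift (fun p => if p.1 then hmap p.2 else emap p.2)

lemma φ_η (k : ℕ) : φ (ηgen k) = hmap k := rfl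
lemma φ_ε (k : ℕ) : φ (εgen k) = emap k := rfl

lemma φ_rel {a b : FreeAdj} (h : R0 a b) : φ a = φ b := by
  cases h with
  | ee h => funext n; simp only [map_mul, φ_ε, mulE, emap]; split_ifs <;> omega
  | hh h => funext n; simp only [map_mul, φ_η, mulE, hmap]; split_ifs <;> omega
  | eh_gt h => funext n; simp only [map_mul, φ_ε, φ_η, mulE, emap, hmap]; split_ifs <;> omega
  | eh_lt h => funext n; simp only [map_mul, φ_ε, φ_η, mulE, emap, hmap]; split_ifs <;> omega
  | eh_eq h => funext n; simp only [map_mul, φ_ε, φ_η, mulE, emap, hmap]; split_ifs <;> omega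
  | eh_succ i => funext n; simp only [map_mul, φ_ε, φ_η, mulE, emap, hmap]; split_ifs <;> omega
  | eh_zero => funext n; simp only [map_mul, map_one, φ_ε, φ_η, mulE, oneE, emap, hmap]; split_ifs <;> omega

def φbar : F0 →* Function.End ℕ :=
  Con.lift _ φ (Con.conGen_le.mpr fun x y h => (Con.ker_rel φ).mpr (φ_rel h))

lemma φbar_π (w : FreeAdj) : φbar (πmap w) = φ w := Con.lift_mk' _ _

lemma π_rel {a b : FreeAdj} (h : R0 a b) : πmap a = πmap b :=
  (Con.eq _).mpr (ConGen.Rel.of _ _ h)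

end Canon

namespace Canon
open List

lemma π_congr_right {a b : FreeAdj} (c : FreeAdj) (h : πmap a = πmap b) :
    πmap (a * c) = πmap (b * c) := by rw [map_mul, map_mul, h]

lemma π_congr_left {a b : FreeAdj} (c : FreeAdj) (h : πmap a = πmap b) :
    πmap (c * a) = πmap (c * b) := by rw [map_mul, map_mul, h]

def Hword (is : List ℕ) : FreeAdj := (is.map ηgen).prod
def Eword (js : List ℕ) : FreeAdj := (js.map εgen).prod

lemma Hword_nil : Hword [] = 1 := rfl
lemma Eword_nil : Eword [] = 1 := rfl
lemma Hword_cons (i : ℕ) (is : List ℕ) : Hword (i :: is) = ηgen i * Hword is := by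
  simp [Hword]
lemma Eword_cons (j : ℕ) (js : List ℕ) : Eword (j :: js) = εgen j * Eword js := by
  simp [Eword]

lemma π_cancel (i : ℕ) : πmap (εgen i * ηgen i) = 1 := by
  induction i with
  | zero => rw [π_rel R0.eh_zero, map_one]
  | succ n ih =>
      have h1 := π_rel (R0.eh_eq (Nat.succ_pos n))
      simp only [Nat.succ_sub_one] at h1
      rw [h1, π_rel (R0.eh_succ n), ih]

lemma π_cancel' (i : ℕ) : πmap (εgen i * ηgen (i + 1)) = 1 := by
  rw [π_rel (R0.eh_succ i), π_cancel]

/-! ### insertion of an η -/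

def insertη : ℕ → List ℕ → List ℕ
  | k, [] => [k]
  | k, i :: is => if k ≤ i then k :: i :: is else i :: insertη (k - 1) is

lemma insertη_lb : ∀ (is : List ℕ) (k i : ℕ), i ≤ k → (∀ x ∈ is, i ≤ x) →
    ∀ y ∈ insertη k is, i ≤ y := by
  intro is
  induction is with
  | nil => intro k i hik _ y hy; simp only [insertη, mem_singleton] at hy; omega
  | cons a l ih =>
      intro k i hik hall y hy
      simp only [insertη] at hy
      split_ifs at hy with h
      · rcases mem_cons.mp hy with rfl | hy
        · exact hik
        · exact hall y hy
      · rcases mem_cons.mp hy with rfl | hy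
        · exact hall y (mem_cons_self)
        · have ha : i ≤ a := hall a (mem_cons_self)
          exact ih (k - 1) i (by omega) (fun x hx => hall x (mem_cons_of_mem _ hx)) y hy

lemma insertη_sorted : ∀ (is : List ℕ) (k : ℕ), is.Pairwise (· ≤ ·) →
    (insertη k is).Pairwise (· ≤ ·) := by
  intro is
  induction is with
  | nil => intro k _; simp [insertη]
  | cons a l ih =>
      intro k hs
      rcases pairwise_cons.mp hs with ⟨hb, hl⟩
      simp only [insertη]
      split_ifs with h
      · refine pairwise_cons.mpr ⟨?_, hs⟩
        intro b hb'
        rcases mem_cons.mp hb' with rfl | hb'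
        · exact h
        · exact le_trans h (hb b hb')
      · refine pairwise_cons.mpr ⟨?_, ih (k - 1) hl⟩
        intro b hb'
        exact insertη_lb l (k - 1) a (by omega) hb b hb'

lemma insertη_eq : ∀ (is : List ℕ) (k : ℕ),
    πmap (ηgen k * Hword is) = πmap (Hword (insertη k is)) := by
  intro is
  induction is with
  | nil => intro k; simp [insertη, Hword]
  | cons i l ih =>
      intro k
      by_cases h : k ≤ i
      · simp only [insertη, if_pos h, Hword_cons, map_mul]
      · push_neg at h
        have h1 : πmap (ηgen k * ηgen i) = πmap (ηgen i * ηgen (k - 1)) := π_rel (R0.hh h)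
        calc πmap (ηgen k * Hword (i :: l))
            = πmap ((ηgen k * ηgen i) * Hword l) := by rw [Hword_cons, mul_assoc]
          _ = πmap ((ηgen i * ηgen (k - 1)) * Hword l) := π_congr_right _ h1
          _ = πmap (ηgen i) * πmap (ηgen (k - 1) * Hword l) := by rw [mul_assoc, map_mul]
          _ = πmap (ηgen i) * πmap (Hword (insertη (k - 1) l)) := by rw [ih]
          _ = πmap (Hword (insertη k (i :: l))) := by
                rw [← map_mul, ← Hword_cons]
                simp only [insertη, if_neg (by omega : ¬ k ≤ i)]

/-! ### insertion of an ε -/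

def insertε : ℕ → List ℕ → List ℕ
  | k, [] => [k]
  | k, j :: js => if j ≤ k then k :: j :: js else (j - 1) :: insertε k js

lemma insertε_ub : ∀ (js : List ℕ), js.Pairwise (· ≥ ·) → ∀ (k j : ℕ), k < j →
    (∀ x ∈ js, x ≤ j) → ∀ y ∈ insertε k js, y < j := by
  intro js
  induction js with
  | nil => intro _ k j hkj _ y hy; simp only [insertε, mem_singleton] at hy; omega
  | cons a l ih =>
      intro hs k j hkj hall y hy
      rcases pairwise_cons.mp hs with ⟨hb, hl⟩
      simp only [insertε] at hy
      split_ifs at hy with h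
      · rcases mem_cons.mp hy with rfl | hy
        · exact hkj
        · rcases mem_cons.mp hy with rfl | hy
          · omega
          · have := hb y hy; omega
      · rcases mem_cons.mp hy with rfl | hy
        · have := hall a (mem_cons_self); omega
        · have := ih hl k a (by omega) hb y hy
          have := hall a (mem_cons_self); omega

lemma insertε_sorted : ∀ (js : List ℕ) (k : ℕ), js.Pairwise (· ≥ ·) →
    (insertε k js).Pairwise (· ≥ ·) := by
  intro js
  induction js with
  | nil => intro k _; simp [insertε]
  | cons a l ih =>
      intro k hs
      rcases pairwise_cons.mp hs with ⟨hb, hl⟩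
      simp only [insertε]
      split_ifs with h
      · refine pairwise_cons.mpr ⟨?_, hs⟩
        intro b hb'
        rcases mem_cons.mp hb' with rfl | hb'
        · exact h
        · exact le_trans (hb b hb') h
      · refine pairwise_cons.mpr ⟨?_, ih k hl⟩
        intro b hb'
        have := insertε_ub l hl k a (by omega) hb b hb'
        omega

lemma insertε_eq : ∀ (js : List ℕ) (k : ℕ),
    πmap (εgen k * Eword js) = πmap (Eword (insertε k js)) := by
  intro js
  induction js with
  | nil => intro k; simp [insertε, Eword]
  | cons j l ih =>
      intro k
      by_cases h : j ≤ k
      · simp only [insertε, if_pos h, Eword_cons, map_mul]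
      · push_neg at h
        have h1 : πmap (εgen k * εgen j) = πmap (εgen (j - 1) * εgen k) := π_rel (R0.ee h)
        calc πmap (εgen k * Eword (j :: l))
            = πmap ((εgen k * εgen j) * Eword l) := by rw [Eword_cons, mul_assoc]
          _ = πmap ((εgen (j - 1) * εgen k) * Eword l) := π_congr_right _ h1
          _ = πmap (εgen (j - 1)) * πmap (εgen k * Eword l) := by rw [mul_assoc, map_mul]
          _ = πmap (εgen (j - 1)) * πmap (Eword (insertε k l)) := by rw [ih]
          _ = πmap (Eword (insertε k (j :: l))) := by
                rw [← map_mul, ← Eword_cons]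
                simp only [insertε, if_neg (by omega : ¬ j ≤ k)]

end Canon

namespace Canon
open List

/-! ### pushing an ε through the η's -/

def pushε : ℕ → List ℕ → List ℕ × Option ℕ
  | k, [] => ([], some k)
  | k, i :: is =>
    if i = k ∨ i = k + 1 then (is, none)
    else if k + 1 < i then ((i - 1) :: (pushε k is).1, (pushε k is).2)
    else (i :: (pushε (k - 1) is).1, (pushε (k - 1) is).2)

lemma pushε_lb1 : ∀ (is : List ℕ) (k i : ℕ), (∀ x ∈ is, i ≤ x) →
    ∀ y ∈ (pushε k is).1, i - 1 ≤ y := by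
  intro is
  induction is with
  | nil => intro k i _ y hy; simp [pushε] at hy
  | cons a l ih =>
      intro k i hall y hy
      have ha : i ≤ a := hall a (mem_cons_self)
      have hl : ∀ x ∈ l, i ≤ x := fun x hx => hall x (mem_cons_of_mem _ hx)
      simp only [pushε] at hy
      split_ifs at hy with h1 h2
      · have := hl y hy; omega
      · rcases mem_cons.mp hy with rfl | hy
        · omega
        · exact ih k i hl y hy
      · rcases mem_cons.mp hy with rfl | hy
        · omega
        · exact ih (k - 1) i hl y hy

lemma pushε_lb2 : ∀ (is : List ℕ) (k i : ℕ), i ≤ k → (∀ x ∈ is, i ≤ x) →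
    ∀ y ∈ (pushε k is).1, i ≤ y := by
  intro is
  induction is with
  | nil => intro k i _ _ y hy; simp [pushε] at hy
  | cons a l ih =>
      intro k i hik hall y hy
      have ha : i ≤ a := hall a (mem_cons_self)
      have hl : ∀ x ∈ l, i ≤ x := fun x hx => hall x (mem_cons_of_mem _ hx)
      simp only [pushε] at hy
      split_ifs at hy with h1 h2
      · exact hl y hy
      · rcases mem_cons.mp hy with rfl | hy
        · omega
        · exact ih k i hik hl y hy
      · rcases mem_cons.mp hy with rfl | hy
        · omega
        · exact ih (k - 1) i (by omega) hl y hy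

lemma pushε_sorted : ∀ (is : List ℕ) (k : ℕ), is.Pairwise (· ≤ ·) →
    ((pushε k is).1).Pairwise (· ≤ ·) := by
  intro is
  induction is with
  | nil => intro k _; simp [pushε]
  | cons a l ih =>
      intro k hs
      rcases pairwise_cons.mp hs with ⟨hb, hl⟩
      simp only [pushε]
      split_ifs with h1 h2
      · exact hl
      · refine pairwise_cons.mpr ⟨?_, ih k hl⟩
        intro b hb'
        have := pushε_lb1 l k a hb b hb'
        omega
      · refine pairwise_cons.mpr ⟨?_, ih (k - 1) hl⟩
        intro b hb'
        exact pushε_lb2 l (k - 1) a (by omega) hb b hb'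

def optE : Option ℕ → FreeAdj := fun o => o.elim 1 εgen

lemma pushε_eq : ∀ (is : List ℕ) (k : ℕ),
    πmap (εgen k * Hword is) = πmap (Hword (pushε k is).1 * optE (pushε k is).2) := by
  intro is
  induction is with
  | nil => intro k; simp [pushε, optE, Hword]
  | cons a l ih =>
      intro k
      by_cases h1 : a = k ∨ a = k + 1
      · have hc : πmap (εgen k * ηgen a) = 1 := by
          rcases h1 with h | h
          · rw [h]; exact π_cancel k
          · rw [h]; exact π_cancel' k
        calc πmap (εgen k * Hword (a :: l))
            = πmap ((εgen k * ηgen a) * Hword l) := by rw [Hword_cons, mul_assoc]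
          _ = πmap (εgen k * ηgen a) * πmap (Hword l) := map_mul _ _ _
          _ = πmap (Hword l) := by rw [hc, one_mul]
          _ = πmap (Hword (pushε k (a :: l)).1 * optE (pushε k (a :: l)).2) := by
                simp only [pushε, if_pos h1, optE, Option.elim, mul_one]
      · by_cases h2 : k + 1 < a
        · have hr : πmap (εgen k * ηgen a) = πmap (ηgen (a - 1) * εgen k) :=
            π_rel (R0.eh_gt h2)
          calc πmap (εgen k * Hword (a :: l))
              = πmap ((εgen k * ηgen a) * Hword l) := by rw [Hword_cons, mul_assoc]
            _ = πmap ((ηgen (a - 1) * εgen k) * Hword l) := π_congr_right _ hr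
            _ = πmap (ηgen (a - 1)) * πmap (εgen k * Hword l) := by rw [mul_assoc, map_mul]
            _ = πmap (ηgen (a - 1)) * πmap (Hword (pushε k l).1 * optE (pushε k l).2) := by
                  rw [ih]
            _ = πmap (Hword (pushε k (a :: l)).1 * optE (pushε k (a :: l)).2) := by
                  simp only [pushε, if_neg h1, if_pos h2, Hword_cons]
                  rw [← map_mul, mul_assoc]
        · have h3 : a < k := by omega
          have hr : πmap (εgen k * ηgen a) = πmap (ηgen a * εgen (k - 1)) :=
            π_rel (R0.eh_lt h3)
          calc πmap (εgen k * Hword (a :: l))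
              = πmap ((εgen k * ηgen a) * Hword l) := by rw [Hword_cons, mul_assoc]
            _ = πmap ((ηgen a * εgen (k - 1)) * Hword l) := π_congr_right _ hr
            _ = πmap (ηgen a) * πmap (εgen (k - 1) * Hword l) := by rw [mul_assoc, map_mul]
            _ = πmap (ηgen a) * πmap (Hword (pushε (k - 1) l).1 * optE (pushε (k - 1) l).2) := by
                  rw [ih]
            _ = πmap (Hword (pushε k (a :: l)).1 * optE (pushε k (a :: l)).2) := by
                  simp only [pushε, if_neg h1, if_neg h2, Hword_cons]
                  rw [← map_mul, mul_assoc]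

/-! ### the normal form -/

def nfL : List (Bool × ℕ) → List ℕ × List ℕ
  | [] => ([], [])
  | (true, k) :: w => (insertη k (nfL w).1, (nfL w).2)
  | (false, k) :: w =>
      ((pushε k (nfL w).1).1,
        match (pushε k (nfL w).1).2 with
        | none => (nfL w).2
        | some k' => insertε k' (nfL w).2)

lemma nfL_sorted : ∀ w : List (Bool × ℕ),
    ((nfL w).1).Pairwise (· ≤ ·) ∧ ((nfL w).2).Pairwise (· ≥ ·) := by
  intro w
  induction w with
  | nil => simp [nfL]
  | cons g w ih =>
      obtain ⟨b, k⟩ := g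
      cases b
      · refine ⟨pushε_sorted _ _ ih.1, ?_⟩
        simp only [nfL]
        cases (pushε k (nfL w).1).2 with
        | none => exact ih.2
        | some k' => exact insertε_sorted _ _ ih.2
      · exact ⟨insertη_sorted _ _ ih.1, ih.2⟩

lemma nfL_eq : ∀ w : List (Bool × ℕ),
    πmap (FreeMonoid.ofList w) = πmap (Hword (nfL w).1 * Eword (nfL w).2) := by
  intro w
  induction w with
  | nil => simp [nfL, Hword, Eword]
  | cons g w ih =>
      obtain ⟨b, k⟩ := g
      have hw : FreeMonoid.ofList ((b, k) :: w) = FreeMonoid.of (b, k) * FreeMonoid.ofList w :=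
        rfl
      cases b
      · -- ε case
        have step1 : πmap (FreeMonoid.ofList ((false, k) :: w))
            = πmap ((εgen k * Hword (nfL w).1) * Eword (nfL w).2) := by
          rw [hw]
          calc πmap (FreeMonoid.of (false, k) * FreeMonoid.ofList w)
              = πmap (εgen k) * πmap (FreeMonoid.ofList w) := map_mul _ _ _
            _ = πmap (εgen k) * πmap (Hword (nfL w).1 * Eword (nfL w).2) := by rw [ih]
            _ = πmap ((εgen k * Hword (nfL w).1) * Eword (nfL w).2) := by
                  simp only [map_mul, mul_assoc]
        rw [step1, π_congr_right _ (pushε_eq (nfL w).1 k)]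
        cases hp : (pushε k (nfL w).1).2 with
        | none =>
            simp only [nfL, hp, optE, Option.elim, mul_one]
        | some k' =>
            simp only [nfL, hp, optE, Option.elim]
            calc πmap ((Hword (pushε k (nfL w).1).1 * εgen k') * Eword (nfL w).2)
                = πmap (Hword (pushε k (nfL w).1).1) * πmap (εgen k' * Eword (nfL w).2) := by
                    rw [mul_assoc, map_mul]
              _ = πmap (Hword (pushε k (nfL w).1).1) * πmap (Eword (insertε k' (nfL w).2)) := by
                    rw [insertε_eq]
              _ = πmap (Hword (pushε k (nfL w).1).1 * Eword (insertε k' (nfL w).2)) := by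
                    rw [map_mul]
      · -- η case
        rw [hw]
        calc πmap (FreeMonoid.of (true, k) * FreeMonoid.ofList w)
            = πmap (ηgen k) * πmap (FreeMonoid.ofList w) := map_mul _ _ _
          _ = πmap (ηgen k) * πmap (Hword (nfL w).1 * Eword (nfL w).2) := by rw [ih]
          _ = πmap ((ηgen k * Hword (nfL w).1) * Eword (nfL w).2) := by
                simp only [map_mul, mul_assoc]
          _ = πmap (Hword (insertη k (nfL w).1) * Eword (nfL w).2) :=
                π_congr_right _ (insertη_eq (nfL w).1 k)
          _ = πmap (Hword (nfL ((true, k) :: w)).1 * Eword (nfL ((true, k) :: w)).2) := rfl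

end Canon

namespace Canon
open List

/-! ### function-side lemmas -/

def Hfun (is : List ℕ) : Function.End ℕ := (is.map hmap).prod
def Efun (js : List ℕ) : Function.End ℕ := (js.map emap).prod

lemma Hfun_nil : Hfun [] = 1 := rfl
lemma Efun_nil : Efun [] = 1 := rfl
lemma Hfun_cons (a : ℕ) (l : List ℕ) : Hfun (a :: l) = hmap a * Hfun l := by simp [Hfun]
lemma Efun_cons (a : ℕ) (l : List ℕ) : Efun (a :: l) = emap a * Efun l := by simp [Efun]
lemma Hfun_cons_apply (a : ℕ) (l : List ℕ) (n : ℕ) :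
    Hfun (a :: l) n = hmap a (Hfun l n) := by rw [Hfun_cons]; rfl
lemma Efun_cons_apply (a : ℕ) (l : List ℕ) (n : ℕ) :
    Efun (a :: l) n = emap a (Efun l n) := by rw [Efun_cons]; rfl

lemma φ_word (is js : List ℕ) : φ (Hword is * Eword js) = Hfun is * Efun js := by
  have h1 : φ (Hword is) = Hfun is := by
    induction is with
    | nil => simp [Hword, Hfun]
    | cons a l ih => rw [Hword_cons, map_mul, φ_η, ih, Hfun_cons]
  have h2 : φ (Eword js) = Efun js := by
    induction js with
    | nil => simp [Eword, Efun]
    | cons a l ih => rw [Eword_cons, map_mul, φ_ε, ih, Efun_cons]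
  rw [map_mul, h1, h2]

lemma hmap_sm (i : ℕ) : StrictMono (hmap i) := by
  intro a b h; simp only [hmap]; split_ifs <;> omega

lemma Hfun_sm : ∀ is : List ℕ, StrictMono (Hfun is) := by
  intro is
  induction is with
  | nil => exact fun a b h => h
  | cons a l ih =>
      intro x y h
      rw [Hfun_cons_apply, Hfun_cons_apply]
      exact hmap_sm a (ih h)

lemma emap_surj (i : ℕ) : Function.Surjective (emap i) := by
  intro m
  by_cases h : m ≤ i
  · exact ⟨m, by simp [emap, h]⟩
  · exact ⟨m + 1, by simp only [emap]; rw [if_neg (by omega)]; omega⟩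

lemma Efun_surj : ∀ js : List ℕ, Function.Surjective (Efun js) := by
  intro js
  induction js with
  | nil => exact fun m => ⟨m, rfl⟩
  | cons a l ih =>
      intro m
      obtain ⟨x, hx⟩ := emap_surj a m
      obtain ⟨y, hy⟩ := ih x
      exact ⟨y, by rw [Efun_cons_apply, hy, hx]⟩

lemma Hfun_le : ∀ (is : List ℕ) (n : ℕ), n ≤ Hfun is n := by
  intro is
  induction is with
  | nil => exact fun n => le_rfl
  | cons a l ih =>
      intro n
      rw [Hfun_cons_apply]
      have h1 := ih n
      have h2 : Hfun l n ≤ hmap a (Hfun l n) := by simp only [hmap]; split_ifs <;> omega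
      omega

lemma Hfun_fix : ∀ (is : List ℕ) (n : ℕ), (∀ x ∈ is, n < x) → Hfun is n = n := by
  intro is
  induction is with
  | nil => exact fun n _ => rfl
  | cons a l ih =>
      intro n h
      rw [Hfun_cons_apply, ih n (fun x hx => h x (mem_cons_of_mem _ hx))]
      have := h a (mem_cons_self)
      simp only [hmap]; rw [if_pos this]

lemma Hfun_head_lt (i : ℕ) (is : List ℕ) : i < Hfun (i :: is) i := by
  rw [Hfun_cons_apply]
  have h1 := Hfun_le is i
  simp only [hmap]; split_ifs <;> omega

lemma Hinj : ∀ is1 is2 : List ℕ, is1.Pairwise (· ≤ ·) → is2.Pairwise (· ≤ ·) →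
    Hfun is1 = Hfun is2 → is1 = is2 := by
  intro is1
  induction is1 with
  | nil =>
      intro is2 _ h2 he
      cases is2 with
      | nil => rfl
      | cons a l =>
          exfalso
          have h3 := Hfun_head_lt a l
          have h4 := congrFun he a
          have h5 : Hfun [] a = a := rfl
          omega
  | cons i l ih =>
      intro is2 h1 h2 he
      cases is2 with
      | nil =>
          exfalso
          have h3 := Hfun_head_lt i l
          have h4 := congrFun he i
          have h5 : Hfun [] i = i := rfl
          omega
      | cons i' l' =>
          rcases pairwise_cons.mp h1 with ⟨hb1, hl1⟩
          rcases pairwise_cons.mp h2 with ⟨hb2, hl2⟩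
          have hii : i = i' := by
            rcases lt_trichotomy i i' with h | h | h
            · exfalso
              have e1 := congrFun he i
              have e2 : Hfun (i' :: l') i = i := by
                apply Hfun_fix
                intro x hx
                rcases mem_cons.mp hx with rfl | hx
                · exact h
                · exact lt_of_lt_of_le h (hb2 x hx)
              have e3 := Hfun_head_lt i l
              omega
            · exact h
            · exfalso
              have e1 := congrFun he i'
              have e2 : Hfun (i :: l) i' = i' := by
                apply Hfun_fix
                intro x hx
                rcases mem_cons.mp hx with rfl | hx
                · exact h
                · exact lt_of_lt_of_le h (hb1 x hx)
              have e3 := Hfun_head_lt i' l'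
              omega
          subst hii
          have htail : Hfun l = Hfun l' := by
            funext n
            have e := congrFun he n
            rw [Hfun_cons_apply, Hfun_cons_apply] at e
            exact (hmap_sm i).injective e
          rw [ih l' hl1 hl2 htail]

lemma Efun_fix : ∀ (js : List ℕ) (n : ℕ), (∀ x ∈ js, n ≤ x) → ∀ m ≤ n, Efun js m = m := by
  intro js
  induction js with
  | nil => exact fun n _ m _ => rfl
  | cons a l ih =>
      intro n h m hm
      rw [Efun_cons_apply, ih n (fun x hx => h x (mem_cons_of_mem _ hx)) m hm]
      have := h a (mem_cons_self)
      simp only [emap]; rw [if_pos (by omega)]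

lemma Efun_concat (l : List ℕ) (m : ℕ) : Efun (l ++ [m]) = Efun l * emap m := by
  simp [Efun, List.map_append, List.prod_append]

lemma Efun_low (a : List ℕ) (m : ℕ) (hb : ∀ x ∈ a, m ≤ x) :
    ∀ n ≤ m, Efun (a ++ [m]) n = n := by
  intro n hn
  rw [Efun_concat]
  have h1 : emap m n = n := by simp [emap, hn]
  show Efun a (emap m n) = n
  rw [h1]
  exact Efun_fix a m hb n hn

lemma Efun_merge (a : List ℕ) (m : ℕ) (hb : ∀ x ∈ a, m ≤ x) :
    Efun (a ++ [m]) (m + 1) = m := by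
  rw [Efun_concat]
  have h1 : emap m (m + 1) = m := by simp only [emap]; rw [if_neg (by omega)]; omega
  show Efun a (emap m (m + 1)) = m
  rw [h1]
  exact Efun_fix a m hb m le_rfl

lemma sorted_concat_bound {a : List ℕ} {m : ℕ} (h : (a ++ [m]).Pairwise (· ≥ ·)) :
    ∀ x ∈ a, m ≤ x := by
  intro x hx
  rcases List.pairwise_append.mp h with ⟨_, _, hrel⟩
  exact hrel x hx m (mem_singleton_self m)

lemma Einj_aux : ∀ (N : ℕ) (js1 js2 : List ℕ), js1.length ≤ N →
    js1.Pairwise (· ≥ ·) → js2.Pairwise (· ≥ ·) → Efun js1 = Efun js2 → js1 = js2 := by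
  intro N
  induction N with
  | zero =>
      intro js1 js2 hlen h1 h2 he
      have : js1 = [] := List.length_eq_zero_iff.mp (by omega)
      subst this
      rcases List.eq_nil_or_concat' js2 with rfl | ⟨b, m, rfl⟩
      · rfl
      · exfalso
        have e1 := congrFun he (m + 1)
        have e2 : Efun [] (m + 1) = m + 1 := rfl
        rw [e2, Efun_merge b m (sorted_concat_bound h2)] at e1
        omega
  | succ N ih =>
      intro js1 js2 hlen h1 h2 he
      rcases List.eq_nil_or_concat' js1 with rfl | ⟨a, m1, rfl⟩
      · rcases List.eq_nil_or_concat' js2 with rfl | ⟨b, m2, rfl⟩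
        · rfl
        · exfalso
          have e1 := congrFun he (m2 + 1)
          have e2 : Efun [] (m2 + 1) = m2 + 1 := rfl
          rw [e2, Efun_merge b m2 (sorted_concat_bound h2)] at e1
          omega
      · rcases List.eq_nil_or_concat' js2 with rfl | ⟨b, m2, rfl⟩
        · exfalso
          have e1 := congrFun he (m1 + 1)
          have e2 : Efun [] (m1 + 1) = m1 + 1 := rfl
          rw [Efun_merge a m1 (sorted_concat_bound h1), e2] at e1
          omega
        · have hb1 := sorted_concat_bound h1
          have hb2 := sorted_concat_bound h2
          have hm : m1 = m2 := by
            rcases lt_trichotomy m1 m2 with h | h | h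
            · exfalso
              have e1 := congrFun he (m1 + 1)
              rw [Efun_merge a m1 hb1, Efun_low b m2 hb2 (m1 + 1) (by omega)] at e1
              omega
            · exact h
            · exfalso
              have e1 := congrFun he (m2 + 1)
              rw [Efun_merge b m2 hb2, Efun_low a m1 hb1 (m2 + 1) (by omega)] at e1
              omega
          subst hm
          have htail : Efun a = Efun b := by
            funext n
            obtain ⟨x, hx⟩ := emap_surj m1 n
            have e := congrFun he x
            rw [Efun_concat, Efun_concat] at e
            have ea : (Efun a * emap m1) x = Efun a n := by rw [mulE, hx]
            have eb : (Efun b * emap m1) x = Efun b n := by rw [mulE, hx]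
            rw [ea, eb] at e
            exact e
          have hlen' : a.length ≤ N := by
            have := hlen
            simp only [List.length_append, List.length_singleton] at this
            omega
          have hsa : a.Pairwise (· ≥ ·) := (List.pairwise_append.mp h1).1
          have hsb : b.Pairwise (· ≥ ·) := (List.pairwise_append.mp h2).1
          rw [ih a b hlen' hsa hsb htail]

lemma sep {a b c d : List ℕ} (ha : a.Pairwise (· ≤ ·)) (hb : b.Pairwise (· ≥ ·))
    (hc : c.Pairwise (· ≤ ·)) (hd : d.Pairwise (· ≥ ·))
    (h : Hfun a * Efun b = Hfun c * Efun d) : a = c ∧ b = d := by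
  have hcomp : (Hfun a : ℕ → ℕ) ∘ (Efun b : ℕ → ℕ) = (Hfun c : ℕ → ℕ) ∘ (Efun d : ℕ → ℕ) := h
  have hrange : Set.range (Hfun a : ℕ → ℕ) = Set.range (Hfun c : ℕ → ℕ) := by
    calc Set.range (Hfun a : ℕ → ℕ)
        = Set.range ((Hfun a : ℕ → ℕ) ∘ (Efun b : ℕ → ℕ)) :=
          ((Efun_surj b).range_comp _).symm
      _ = Set.range ((Hfun c : ℕ → ℕ) ∘ (Efun d : ℕ → ℕ)) := by rw [hcomp]
      _ = Set.range (Hfun c : ℕ → ℕ) := (Efun_surj d).range_comp _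
  have hH : Hfun a = Hfun c := ((Hfun_sm a).range_inj (Hfun_sm c)).mp hrange
  refine ⟨Hinj a c ha hc hH, ?_⟩
  have hE : Efun b = Efun d := by
    funext n
    have e := congrFun h n
    rw [mulE, mulE, hH] at e
    exact (Hfun_sm c).injective e
  exact Einj_aux b.length b d le_rfl hb hd hE

end Canon


open Canon

/-- (Theorem 1, canonical form) Every element of `F₀` is `π` of a unique word
`η_{i₁} ⋯ η_{i_k} ε_{j₁} ⋯ ε_{j_l}` with `i₁ ≤ ⋯ ≤ i_k` and `j₁ ≥ ⋯ ≥ j_l`. -/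
theorem canonical_form (x : F0) :
    ∃! p : List ℕ × List ℕ,
      p.1.Pairwise (· ≤ ·) ∧ p.2.Pairwise (· ≥ ·) ∧
      x = πmap ((p.1.map ηgen).prod * (p.2.map εgen).prod) := by
  obtain ⟨w, rfl⟩ : ∃ w : FreeAdj, x = πmap w := by
    induction x using Con.induction_on with
    | H w => exact ⟨w, rfl⟩
  refine ⟨nfL (FreeMonoid.toList w), ⟨(nfL_sorted _).1, (nfL_sorted _).2, ?_⟩, ?_⟩
  · have h := nfL_eq (FreeMonoid.toList w)
    rw [FreeMonoid.ofList_toList] at h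
    exact h
  · rintro q ⟨hq1, hq2, hq3⟩
    have hp3 : πmap w = πmap (Hword (nfL (FreeMonoid.toList w)).1 *
        Eword (nfL (FreeMonoid.toList w)).2) := by
      have h := nfL_eq (FreeMonoid.toList w)
      rw [FreeMonoid.ofList_toList] at h
      exact h
    have heq : πmap (Hword q.1 * Eword q.2) =
        πmap (Hword (nfL (FreeMonoid.toList w)).1 * Eword (nfL (FreeMonoid.toList w)).2) := by
      rw [← hp3]
      exact hq3.symm
    have hφ : Hfun q.1 * Efun q.2 =
        Hfun (nfL (FreeMonoid.toList w)).1 * Efun (nfL (FreeMonoid.toList w)).2 := by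
      have := congrArg φbar heq
      rwa [φbar_π, φbar_π, φ_word, φ_word] at this
    obtain ⟨e1, e2⟩ := sep hq1 hq2 (nfL_sorted _).1 (nfL_sorted _).2 hφ
    exact Prod.ext e1 e2
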